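/- There exists a constant c = c(n,m) ∈ (0,1] such that for all index sets I, J ⊆ {1,…,n}, all z⁰ ∈ M̄_I and all z ∈ M̄_J: c·E(z⁰,z) ≤ ρ_0(z⁰,z) ≤ c^{-1}·E(z⁰,z), where E(z⁰,z) := max_{i ∈ I∩J} |√(x⁰_i) − √(x_i)| + max_{j ∈ {1,…,n} \ (I∩J)} |x⁰_j − x_j| + max_{1≤l≤m} |y⁰_l − y_l| (maxima over empty index sets are 0). -/
import Mathlib


open scoped ENNReal BigOperators
open Set

noncomputable section

namespace Kimura

/-- Spatial variable space `ℝ^n × ℝ^m`. -/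
abbrev Z (n m : ℕ) : Type := (Fin n → ℝ) × (Fin m → ℝ)

/-- Time–space variable space. -/
abbrev E (n m : ℕ) : Type := ℝ × Z n m

variable {n m : ℕ}

/-- The open orthant `S_{n,m} = (0,∞)^n × ℝ^m`. -/
def Sopen (n m : ℕ) : Set (Z n m) := {z | ∀ i, 0 < z.1 i}

/-- The closed orthant `S̄_{n,m} = [0,∞)^n × ℝ^m`. -/
def Sbar (n m : ℕ) : Set (Z n m) := {z | ∀ i, 0 ≤ z.1 i}

/-- The function `F` used to define the WF distance. -/
def Fwf (s : ℝ) : ℝ := if s ≤ 1 then 2 * Real.sqrt s else s + 1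

/-- The spatial WF distance `ρ₀`. -/
def rho0 (z0 z : Z n m) : ℝ :=
  (⨆ i : Fin n, |Fwf (z0.1 i) - Fwf (z.1 i)|) + ⨆ l : Fin m, |z0.2 l - z.2 l|

/-- The parabolic WF distance `ρ`. -/
def rho (P0 P : E n m) : ℝ := rho0 P0.2 P.2 + Real.sqrt |P0.1 - P.1|

/-- The parabolic cylinder `J × D`. -/
def QT (J : Set ℝ) (D : Set (Z n m)) : Set (E n m) := J ×ˢ D

/-- Supremum norm on `J × D` (valued in `ℝ≥0∞`). -/
def supN (J : Set ℝ) (D : Set (Z n m)) (u : E n m → ℝ) : ℝ≥0∞ :=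
  ⨆ P ∈ QT J D, ENNReal.ofReal |u P|

/-- The WF Hölder seminorm of exponent `a` on `J × D`. -/
def holderSemi (a : ℝ) (J : Set ℝ) (D : Set (Z n m)) (u : E n m → ℝ) : ℝ≥0∞ :=
  ⨆ P1 ∈ QT J D, ⨆ P2 ∈ QT J D, ⨆ _ : P1 ≠ P2,
    ENNReal.ofReal (|u P1 - u P2| / rho P1 P2 ^ a)

/-- The `C^{0,α}_{WF}` norm on `J × D`. -/
def holderN (a : ℝ) (J : Set ℝ) (D : Set (Z n m)) (u : E n m → ℝ) : ℝ≥0∞ :=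
  supN J D u + holderSemi a J D u

/-- Time direction. -/
def eT (n m : ℕ) : E n m := (1, 0)

/-- `x_i` direction. -/
def eX (n m : ℕ) (i : Fin n) : E n m := (0, (Pi.single i 1, 0))

/-- `y_l` direction. -/
def eY (n m : ℕ) (l : Fin m) : E n m := (0, (0, Pi.single l 1))

/-- Partial (line) derivative along the direction `v`. -/
def dl (v : E n m) (u : E n m → ℝ) : E n m → ℝ := fun P => lineDeriv ℝ u P v

/-- Iterated partial derivative `D_t^τ D_x^{ζx} D_y^{ζy}`. -/
def multiD (τ : ℕ) (ζx : Fin n → ℕ) (ζy : Fin m → ℕ) (u : E n m → ℝ) : E n m → ℝ :=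
  (dl (eT n m))^[τ]
    (((List.ofFn fun i : Fin n => (dl (eX n m i))^[ζx i]).foldr (· ∘ ·) id)
      (((List.ofFn fun l : Fin m => (dl (eY n m l))^[ζy l]).foldr (· ∘ ·) id) u))

/-- A parabolic multi-index `(τ, ζ)`. -/
abbrev MIdx (n m : ℕ) : Type := ℕ × (Fin n → ℕ) × (Fin m → ℕ)

/-- Parabolic weight `2τ + |ζ|` of a multi-index. -/
def MIdx.wt (p : MIdx n m) : ℕ := 2 * p.1 + ((∑ i, p.2.1 i) + ∑ l, p.2.2 l)

/-- Iterated derivative associated with a multi-index. -/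
def multiDP (p : MIdx n m) (u : E n m → ℝ) : E n m → ℝ := multiD p.1 p.2.1 p.2.2 u

/-- Multi-indices of parabolic weight at most `k`. -/
def Idx (n m k : ℕ) : Type := {p : MIdx n m // MIdx.wt p ≤ k}

/-- The `C^{k,α}_{WF}` norm on `J × D`. -/
def CkN (k : ℕ) (a : ℝ) (J : Set ℝ) (D : Set (Z n m)) (u : E n m → ℝ) : ℝ≥0∞ :=
  ∑' p : Idx n m k, holderN a J D (multiDP p.1 u)

/-- The region `M_I`. -/
def MI (n m : ℕ) (I : Finset (Fin n)) : Set (Z n m) :=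
  {z | (∀ i ∈ I, z.1 i ∈ Set.Ioo (0:ℝ) 1) ∧ ∀ j ∉ I, 1 < z.1 j}

/-- The region `M'_I`. -/
def MI' (n m : ℕ) (I : Finset (Fin n)) : Set (Z n m) :=
  {z | (∀ i ∈ I, z.1 i ∈ Set.Ioo (0:ℝ) 1) ∧ ∀ j ∉ I, 1 / 2 < z.1 j}

/-- The region `M''_I`. -/
def MI'' (n m : ℕ) (I : Finset (Fin n)) : Set (Z n m) :=
  {z | (∀ i ∈ I, z.1 i ∈ Set.Ioo (0:ℝ) 2) ∧ ∀ j ∉ I, 1 / 4 < z.1 j}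

/-- The `C^{0,2+α}_{WF}` norm on a piece `D ⊆ M̄_I`. -/
def pieceN (I : Finset (Fin n)) (a : ℝ) (J : Set ℝ) (D : Set (Z n m)) (u : E n m → ℝ) :
    ℝ≥0∞ :=
  CkN 1 a J D u + holderN a J D (dl (eT n m) u)
  + (∑ i ∈ I, ∑ j ∈ I, holderN a J D
      fun P => Real.sqrt (P.2.1 i * P.2.1 j) * dl (eX n m i) (dl (eX n m j) u) P)
  + (∑ i ∈ I, ∑ j ∈ Iᶜ, holderN a J D
      fun P => Real.sqrt (P.2.1 i) * dl (eX n m i) (dl (eX n m j) u) P)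
  + (∑ i ∈ I, ∑ l : Fin m, holderN a J D
      fun P => Real.sqrt (P.2.1 i) * dl (eX n m i) (dl (eY n m l) u) P)
  + (∑ i ∈ Iᶜ, ∑ j ∈ Iᶜ, holderN a J D (dl (eX n m i) (dl (eX n m j) u)))
  + (∑ i ∈ Iᶜ, ∑ l : Fin m, holderN a J D (dl (eX n m i) (dl (eY n m l) u)))
  + ∑ l : Fin m, ∑ q : Fin m, holderN a J D (dl (eY n m l) (dl (eY n m q) u))

/-- The `C^{0,2+α}_{WF}` norm on `J × D` for an arbitrary domain `D`. -/
def C2N (a : ℝ) (J : Set ℝ) (D : Set (Z n m)) (u : E n m → ℝ) : ℝ≥0∞ :=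
  ∑ I : Finset (Fin n), pieceN I a J (D ∩ closure (MI n m I)) u

/-- The `C^{k,2+α}_{WF}` norm on `J × D`. -/
def Ck2N (k : ℕ) (a : ℝ) (J : Set ℝ) (D : Set (Z n m)) (u : E n m → ℝ) : ℝ≥0∞ :=
  ∑' p : Idx n m k, C2N a J D (multiDP p.1 u)

/-- Time-independent extension of a spatial function. -/
def timeExt (f : Z n m → ℝ) : E n m → ℝ := fun P => f P.2

/-- The elliptic `C^{k,α}_{WF}` norm on `D`. -/
def eCkN (k : ℕ) (a : ℝ) (D : Set (Z n m)) (f : Z n m → ℝ) : ℝ≥0∞ :=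
  CkN k a (Set.Icc 0 0) D (timeExt f)

/-- The elliptic `C^{k,2+α}_{WF}` norm on `D`. -/
def eCk2N (k : ℕ) (a : ℝ) (D : Set (Z n m)) (f : Z n m → ℝ) : ℝ≥0∞ :=
  Ck2N k a (Set.Icc 0 0) D (timeExt f)

/-- Supremum norm of a spatial function on `D`. -/
def supNZ (D : Set (Z n m)) (f : Z n m → ℝ) : ℝ≥0∞ := ⨆ z ∈ D, ENNReal.ofReal |f z|

/-- Membership in the space `C^{k,α}_{WF}(J × D)`. -/
def MemCk (k : ℕ) (a : ℝ) (J : Set ℝ) (D : Set (Z n m)) (u : E n m → ℝ) : Prop :=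
  CkN k a J D u ≠ ⊤ ∧ ∀ p : Idx n m k, ContinuousOn (multiDP p.1 u) (QT J D)

/-- Membership in the space `C^{k,2+α}_{WF}(J × D)`. -/
def MemCk2 (k : ℕ) (a : ℝ) (J : Set ℝ) (D : Set (Z n m)) (u : E n m → ℝ) : Prop :=
  Ck2N k a J D u ≠ ⊤
  ∧ (∀ p : Idx n m (k + 1), ContinuousOn (multiDP p.1 u) (QT J D))
  ∧ (∀ p : Idx n m k, ContinuousOn (dl (eT n m) (multiDP p.1 u)) (QT J D))
  ∧ (∀ p : Idx n m (k + 2), ContinuousOn (multiDP p.1 u) (QT J (D ∩ Sopen n m)))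

/-- Membership in the elliptic space `C^{k,α}_{WF}(D)`. -/
def MemECk (k : ℕ) (a : ℝ) (D : Set (Z n m)) (f : Z n m → ℝ) : Prop :=
  MemCk k a (Set.Icc 0 0) D (timeExt f)

/-- Membership in the elliptic space `C^{k,2+α}_{WF}(D)`. -/
def MemECk2 (k : ℕ) (a : ℝ) (D : Set (Z n m)) (f : Z n m → ℝ) : Prop :=
  MemCk2 k a (Set.Icc 0 0) D (timeExt f)

/-- Coefficients of a generalized Kimura operator. -/
structure Coeffs (n m : ℕ) where
  a : Fin n → Z n m → ℝ
  tA : Fin n → Fin n → Z n m → ℝ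
  b : Fin n → Z n m → ℝ
  c : Fin n → Fin m → Z n m → ℝ
  d : Fin m → Fin m → Z n m → ℝ
  e : Fin m → Z n m → ℝ

/-- The generalized Kimura operator `L`. -/
def Lop (co : Coeffs n m) (u : E n m → ℝ) : E n m → ℝ := fun P =>
  (∑ i, (P.2.1 i * co.a i P.2 * dl (eX n m i) (dl (eX n m i) u) P
        + co.b i P.2 * dl (eX n m i) u P))
  + (∑ i, ∑ j, P.2.1 i * P.2.1 j * co.tA i j P.2 * dl (eX n m i) (dl (eX n m j) u) P)
  + (∑ i, ∑ l, P.2.1 i * co.c i l P.2 * dl (eX n m i) (dl (eY n m l) u) P)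
  + (∑ q, ∑ l, co.d q l P.2 * dl (eY n m q) (dl (eY n m l) u) P)
  + ∑ l, co.e l P.2 * dl (eY n m l) u P

/-- Strict ellipticity (condition (1) of the Assumption). -/
def Ellipt (δ : ℝ) (co : Coeffs n m) : Prop :=
  ∀ I : Finset (Fin n), ∀ z ∈ closure (MI n m I), ∀ ξ : Fin n → ℝ, ∀ η : Fin m → ℝ,
    δ * ((∑ i, ξ i ^ 2) + ∑ l, η l ^ 2) ≤
      (∑ i ∈ I, co.a i z * ξ i ^ 2) + (∑ i ∈ Iᶜ, z.1 i * co.a i z * ξ i ^ 2)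
      + (∑ i ∈ I, ∑ j ∈ I, co.tA i j z * ξ i * ξ j)
      + (∑ i ∈ I, ∑ j ∈ Iᶜ, z.1 j * (co.tA i j z + co.tA j i z) * ξ i * ξ j)
      + (∑ i ∈ Iᶜ, ∑ j ∈ Iᶜ, z.1 i * z.1 j * co.tA i j z * ξ i * ξ j)
      + (∑ i ∈ I, ∑ l, co.c i l z * ξ i * η l)
      + (∑ i ∈ Iᶜ, ∑ l, z.1 i * co.c i l z * ξ i * η l)
      + ∑ q, ∑ l, co.d q l z * η q * η l

/-- Hölder continuity of the coefficients (condition (2) of the Assumption). -/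
def HolderBd (k : ℕ) (a K : ℝ) (co : Coeffs n m) : Prop :=
  ∀ I : Finset (Fin n),
    (∑ i ∈ I, eCkN k a (closure (MI n m I)) (co.a i))
    + (∑ i ∈ Iᶜ, eCkN k a (closure (MI n m I)) fun z => z.1 i * co.a i z)
    + (∑ i ∈ I, ∑ j ∈ I, eCkN k a (closure (MI n m I)) (co.tA i j))
    + (∑ i ∈ I, ∑ j ∈ Iᶜ,
        (eCkN k a (closure (MI n m I)) (fun z => z.1 j * co.tA i j z)
         + eCkN k a (closure (MI n m I)) fun z => z.1 j * co.tA j i z))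
    + (∑ i ∈ Iᶜ, ∑ j ∈ Iᶜ, eCkN k a (closure (MI n m I)) fun z => z.1 i * z.1 j * co.tA i j z)
    + (∑ i ∈ I, ∑ l, eCkN k a (closure (MI n m I)) (co.c i l))
    + (∑ i ∈ Iᶜ, ∑ l, eCkN k a (closure (MI n m I)) fun z => z.1 i * co.c i l z)
    + (∑ q, ∑ l, eCkN k a (closure (MI n m I)) (co.d q l))
    + (∑ i, eCkN k a (closure (MI n m I)) (co.b i))
    + (∑ l, eCkN k a (closure (MI n m I)) (co.e l))
    ≤ ENNReal.ofReal K

/-- Nonnegativity of the drift (condition (3) of the Assumption). -/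
def NonnegDrift (co : Coeffs n m) : Prop :=
  ∀ i, ∀ z ∈ Sbar n m, z.1 i = 0 → 0 ≤ co.b i z

/-- The full coefficient Assumption of order `k`, exponent `a`, constants `δ`, `K`. -/
def Assump (k : ℕ) (a δ K : ℝ) (co : Coeffs n m) : Prop :=
  Ellipt δ co ∧ HolderBd k a K co ∧ NonnegDrift co

/-- The Euclidean ball of radius `r` about `z0`, relative to `S_{n,m}`. -/
def ball (z0 : Z n m) (r : ℝ) : Set (Z n m) :=
  {z ∈ Sopen n m |
    Real.sqrt ((∑ i, (z.1 i - z0.1 i) ^ 2) + ∑ l, (z.2 l - z0.2 l) ^ 2) < r}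

/-- A function all of whose iterated derivatives are continuous and bounded on `J × D`. -/
def SmoothBdd (J : Set ℝ) (D : Set (Z n m)) (g : E n m → ℝ) : Prop :=
  ∀ p : MIdx n m,
    ContinuousOn (multiDP p g) (QT J D) ∧ ∃ M : ℝ, ∀ P ∈ QT J D, |multiDP p g P| ≤ M

/-- Bounded continuous function on a set. -/
def BCOn {X : Type*} [TopologicalSpace X] (g : X → ℝ) (D : Set X) : Prop :=
  ContinuousOn g D ∧ ∃ M : ℝ, ∀ x ∈ D, |g x| ≤ M

/-- The comparison quantity `E(z⁰,z)` in the equivalence of metrics (1.3). -/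
def eqQty (I J : Finset (Fin n)) (z0 z : Z n m) : ℝ :=
  (⨆ i : {i : Fin n // i ∈ I ∩ J}, |Real.sqrt (z0.1 i) - Real.sqrt (z.1 i)|)
  + (⨆ j : {j : Fin n // j ∉ I ∩ J}, |z0.1 j - z.1 j|)
  + ⨆ l : Fin m, |z0.2 l - z.2 l|

lemma Fwf_of_le_one {s : ℝ} (hs : s ≤ 1) : Fwf s = 2 * Real.sqrt s := if_pos hs

lemma Fwf_of_one_le {t : ℝ} (ht : 1 ≤ t) : Fwf t = t + 1 := by
  unfold Fwf
  split
  · next h =>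
      have : t = 1 := le_antisymm h ht
      subst this; norm_num
  · rfl

lemma mem_closure_MI {n m : ℕ} {I : Finset (Fin n)} {z : Z n m}
    (hz : z ∈ closure (MI n m I)) :
    (∀ i ∈ I, z.1 i ∈ Set.Icc (0:ℝ) 1) ∧ ∀ j ∉ I, 1 ≤ z.1 j := by
  have hcont : ∀ i : Fin n, Continuous fun w : Z n m => w.1 i := fun i =>
    (continuous_apply i).comp continuous_fst
  constructor
  · intro i hi
    have hsub : MI n m I ⊆ {w : Z n m | w.1 i ∈ Set.Icc (0:ℝ) 1} := fun w hw =>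
      Set.Ioo_subset_Icc_self (hw.1 i hi)
    exact closure_minimal hsub (isClosed_Icc.preimage (hcont i)) hz
  · intro j hj
    have hsub : MI n m I ⊆ {w : Z n m | 1 ≤ w.1 j} := fun w hw => le_of_lt (hw.2 j hj)
    exact closure_minimal hsub (isClosed_Ici.preimage (hcont j)) hz

/-- Comparison in the mixed case `0 ≤ s ≤ 1 ≤ t`. -/
lemma Fwf_mixed {s t : ℝ} (hs0 : 0 ≤ s) (hs1 : s ≤ 1) (ht : 1 ≤ t) :
    |s - t| ≤ |Fwf s - Fwf t| ∧ |Fwf s - Fwf t| ≤ 2 * |s - t| := by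
  have hst : s ≤ t := hs1.trans ht
  have h2 : 0 ≤ Real.sqrt s := Real.sqrt_nonneg s
  have h1 : Real.sqrt s ≤ 1 := by
    rw [show (1:ℝ) = Real.sqrt 1 by simp]
    exact Real.sqrt_le_sqrt hs1
  have h3 : Real.sqrt s ^ 2 = s := Real.sq_sqrt hs0
  rw [Fwf_of_le_one hs1, Fwf_of_one_le ht]
  have hneg : 2 * Real.sqrt s - (t + 1) ≤ 0 := by nlinarith
  rw [abs_of_nonpos hneg, abs_of_nonpos (by linarith : s - t ≤ 0)]
  constructor
  · nlinarith
  · nlinarith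

theorem statement18_aux {n m : ℕ} (I J : Finset (Fin n)) (z0 z : Z n m)
    (hz0 : z0 ∈ closure (MI n m I)) (hz : z ∈ closure (MI n m J)) :
    eqQty I J z0 z ≤ 2 * rho0 z0 z ∧ rho0 z0 z ≤ 2 * eqQty I J z0 z := by
  obtain ⟨h0I, h0I'⟩ := mem_closure_MI hz0
  obtain ⟨hJ, hJ'⟩ := mem_closure_MI hz
  set Fd : Fin n → ℝ := fun i => |Fwf (z0.1 i) - Fwf (z.1 i)| with hFd
  -- per-coordinate comparisons
  have hin : ∀ i : Fin n, i ∈ I ∩ J →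
      |Real.sqrt (z0.1 i) - Real.sqrt (z.1 i)| ≤ Fd i ∧
      Fd i ≤ 2 * |Real.sqrt (z0.1 i) - Real.sqrt (z.1 i)| := by
    intro i hi
    have hi1 : i ∈ I := Finset.mem_of_mem_inter_left hi
    have hi2 : i ∈ J := Finset.mem_of_mem_inter_right hi
    have h0 := h0I i hi1
    have h1 := hJ i hi2
    have heq : Fd i = 2 * |Real.sqrt (z0.1 i) - Real.sqrt (z.1 i)| := by
      simp only [hFd, Fwf_of_le_one h0.2, Fwf_of_le_one h1.2, ← mul_sub, abs_mul]
      norm_num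
    rw [heq]
    have := abs_nonneg (Real.sqrt (z0.1 i) - Real.sqrt (z.1 i))
    constructor <;> linarith
  have hout : ∀ i : Fin n, i ∉ I ∩ J →
      |z0.1 i - z.1 i| ≤ Fd i ∧ Fd i ≤ 2 * |z0.1 i - z.1 i| := by
    intro i hi
    rw [Finset.mem_inter, not_and_or] at hi
    by_cases hiI : i ∈ I
    · have hiJ : i ∉ J := by tauto
      have h0 := h0I i hiI
      have h1 := hJ' i hiJ
      simpa only [hFd] using Fwf_mixed h0.1 h0.2 h1
    · by_cases hiJ : i ∈ J
      · have h0 := h0I' i hiI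
        have h1 := hJ i hiJ
        have := Fwf_mixed h1.1 h1.2 h0
        rw [abs_sub_comm (z.1 i), abs_sub_comm (Fwf (z.1 i))] at this
        simpa only [hFd] using this
      · have h0 := h0I' i hiI
        have h1 := hJ' i hiJ
        have heq : Fd i = |z0.1 i - z.1 i| := by
          simp only [hFd, Fwf_of_one_le h0, Fwf_of_one_le h1]
          ring_nf
        rw [heq]
        have := abs_nonneg (z0.1 i - z.1 i)
        constructor <;> linarith
  set A : ℝ := ⨆ i : Fin n, Fd i with hA
  set B1 : ℝ := ⨆ i : {i : Fin n // i ∈ I ∩ J}, |Real.sqrt (z0.1 i) - Real.sqrt (z.1 i)|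
    with hB1
  set B2 : ℝ := ⨆ j : {j : Fin n // j ∉ I ∩ J}, |z0.1 j - z.1 j| with hB2
  set Y : ℝ := ⨆ l : Fin m, |z0.2 l - z.2 l| with hY
  have hrho : rho0 z0 z = A + Y := rfl
  have heq : eqQty I J z0 z = B1 + B2 + Y := rfl
  have hAnn : 0 ≤ A := Real.iSup_nonneg fun i => abs_nonneg _
  have hB1nn : 0 ≤ B1 := Real.iSup_nonneg fun i => abs_nonneg _
  have hB2nn : 0 ≤ B2 := Real.iSup_nonneg fun i => abs_nonneg _
  have hYnn : 0 ≤ Y := Real.iSup_nonneg fun l => abs_nonneg _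
  have hB1A : B1 ≤ A := by
    refine Real.iSup_le (fun i => ?_) hAnn
    exact (hin i.1 i.2).1.trans (le_ciSup (Finite.bddAbove_range Fd) i.1)
  have hB2A : B2 ≤ A := by
    refine Real.iSup_le (fun i => ?_) hAnn
    exact (hout i.1 i.2).1.trans (le_ciSup (Finite.bddAbove_range Fd) i.1)
  have hAB : A ≤ 2 * (B1 + B2) := by
    refine Real.iSup_le (fun i => ?_) (by positivity)
    by_cases hi : i ∈ I ∩ J
    · have h1 : |Real.sqrt (z0.1 i) - Real.sqrt (z.1 i)| ≤ B1 := by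
        rw [hB1]
        exact le_ciSup (f := fun j : {i : Fin n // i ∈ I ∩ J} =>
          |Real.sqrt (z0.1 j.1) - Real.sqrt (z.1 j.1)|)
          (Finite.bddAbove_range _) ⟨i, hi⟩
      have := (hin i hi).2
      linarith
    · have h1 : |z0.1 i - z.1 i| ≤ B2 := by
        rw [hB2]
        exact le_ciSup (f := fun j : {j : Fin n // j ∉ I ∩ J} => |z0.1 j.1 - z.1 j.1|)
          (Finite.bddAbove_range _) ⟨i, hi⟩
      have := (hout i hi).2
      linarith
  rw [hrho, heq]
  constructor <;> linarith

/-- Equivalence of the WF distance with the model quantity (inequality (1.3)). -/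
theorem statement18 (n m : ℕ) (hnm : 1 ≤ n + m) :
    ∃ c : ℝ, c ∈ Set.Ioc (0:ℝ) 1 ∧
      ∀ I J : Finset (Fin n), ∀ z0 ∈ closure (MI n m I), ∀ z ∈ closure (MI n m J),
        c * eqQty I J z0 z ≤ rho0 z0 z ∧ rho0 z0 z ≤ c⁻¹ * eqQty I J z0 z := by
  refine ⟨1/2, by norm_num, fun I J z0 hz0 z hz => ?_⟩
  obtain ⟨h1, h2⟩ := statement18_aux I J z0 z hz0 hz
  have h3 : ((1:ℝ)/2)⁻¹ = 2 := by norm_num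
  rw [h3]
  constructor <;> linarith

end Kimura
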